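/- The ideal I = {f ∈ O(ℂ) : f(n) = 0 for all sufficiently large n ∈ ℕ} is a dense proper ideal in the Fréchet algebra O(ℂ) of entire functions. -/

import Mathlib

set_option synthInstance.maxHeartbeats 4000000
set_option maxHeartbeats 4000000

open Real Set Filter intervalIntegral MeasureTheory Topology

lemma norm_cexp_le (w : ℂ) : ‖Complex.exp w‖ ≤ Real.exp ‖w‖ := by
  rw [Complex.norm_exp]
  exact Real.exp_le_exp.2 ((le_abs_self _).trans (Complex.abs_re_le_norm w))

lemma norm_csin_le_exp (w : ℂ) : ‖Complex.sin w‖ ≤ Real.exp ‖w‖ := by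
  rw [Complex.sin]
  have h1 : ‖Complex.exp (-w * Complex.I)‖ ≤ Real.exp ‖w‖ := by
    refine (norm_cexp_le _).trans (Real.exp_le_exp.2 ?_)
    simp [Complex.norm_def]
  have h2 : ‖Complex.exp (w * Complex.I)‖ ≤ Real.exp ‖w‖ := by
    refine (norm_cexp_le _).trans (Real.exp_le_exp.2 ?_)
    simp [Complex.norm_def]
  calc ‖(Complex.exp (-w * Complex.I) - Complex.exp (w * Complex.I)) * Complex.I / 2‖
      = ‖Complex.exp (-w * Complex.I) - Complex.exp (w * Complex.I)‖ / 2 := by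
        simp [norm_div, norm_mul]
    _ ≤ (Real.exp ‖w‖ + Real.exp ‖w‖) / 2 := by
        gcongr
        exact (norm_sub_le _ _).trans (by gcongr)
    _ = Real.exp ‖w‖ := by ring

lemma norm_ccos_le_exp (w : ℂ) : ‖Complex.cos w‖ ≤ Real.exp ‖w‖ := by
  rw [Complex.cos]
  have h1 : ‖Complex.exp (w * Complex.I)‖ ≤ Real.exp ‖w‖ := by
    refine (norm_cexp_le _).trans (Real.exp_le_exp.2 ?_); simp [Complex.norm_def]
  have h2 : ‖Complex.exp (-w * Complex.I)‖ ≤ Real.exp ‖w‖ := by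
    refine (norm_cexp_le _).trans (Real.exp_le_exp.2 ?_); simp [Complex.norm_def]
  calc ‖(Complex.exp (w * Complex.I) + Complex.exp (-w * Complex.I)) / 2‖
      = ‖Complex.exp (w * Complex.I) + Complex.exp (-w * Complex.I)‖ / 2 := by simp [norm_div]
    _ ≤ (Real.exp ‖w‖ + Real.exp ‖w‖) / 2 := by
        gcongr
        exact (norm_add_le _ _).trans (by gcongr)
    _ = Real.exp ‖w‖ := by ring

-- ‖sin w‖ ≤ ‖w‖ exp ‖w‖ via mean value on the ball
lemma norm_csin_le (w : ℂ) : ‖Complex.sin w‖ ≤ ‖w‖ * Real.exp ‖w‖ := by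
  have key : ∀ u ∈ Metric.closedBall (0:ℂ) ‖w‖,
      HasDerivWithinAt Complex.sin (Complex.cos u) (Metric.closedBall (0:ℂ) ‖w‖) u :=
    fun u _ => (Complex.hasDerivAt_sin u).hasDerivWithinAt
  have hb : ∀ u ∈ Metric.closedBall (0:ℂ) ‖w‖, ‖Complex.cos u‖ ≤ Real.exp ‖w‖ := by
    intro u hu
    exact (norm_ccos_le_exp u).trans (Real.exp_le_exp.2 (by simpa using hu))
  have := (convex_closedBall (0:ℂ) ‖w‖).norm_image_sub_le_of_norm_hasDerivWithin_le
    key hb (Metric.mem_closedBall_self (norm_nonneg w)) (by simpa using Metric.mem_closedBall_self (norm_nonneg w) : w ∈ Metric.closedBall (0:ℂ) ‖w‖)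
  simpa [Complex.sin_zero, mul_comm] using this

lemma norm_cos_two_mul_sub_one_le {R x : ℝ} (hR : 0 ≤ R) {z : ℂ} (hz : ‖z‖ ≤ R)
    (hx0 : 0 ≤ x) (hx : x ≤ π / 2) :
    ‖Complex.cos (2 * z * x) - 1‖ ≤ 2 * R ^ 2 * Real.exp (π * R) * x ^ 2 := by
  have key : Complex.cos (2 * z * x) - 1 = -(2 * Complex.sin (z * x) ^ 2) := by
    have h2 : (2 : ℂ) * z * x = 2 * (z * x) := by ring
    rw [h2, Complex.cos_two_mul']
    have := Complex.sin_sq_add_cos_sq (z * x)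
    linear_combination this
  rw [key, norm_neg]
  have hRx : (0:ℝ) ≤ R * x := mul_nonneg hR hx0
  have h1 : ‖Complex.sin (z * x)‖ ≤ (R * x) * Real.exp (R * x) := by
    have h2 : ‖z * (x:ℂ)‖ ≤ R * x := by
      rw [norm_mul, Complex.norm_real, Real.norm_of_nonneg hx0]
      exact mul_le_mul_of_nonneg_right hz hx0
    calc ‖Complex.sin (z * x)‖ ≤ ‖z * (x:ℂ)‖ * Real.exp ‖z * (x:ℂ)‖ := norm_csin_le _
      _ ≤ (R * x) * Real.exp (R * x) :=
          mul_le_mul h2 (Real.exp_le_exp.2 h2) (Real.exp_pos _).le hRx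
  calc ‖2 * Complex.sin (z * x) ^ 2‖ = 2 * ‖Complex.sin (z * x)‖ ^ 2 := by
        simp [norm_mul, norm_pow]
    _ ≤ 2 * ((R * x) * Real.exp (R * x)) ^ 2 := by gcongr
    _ = 2 * R ^ 2 * (Real.exp (R * x))^2 * x ^ 2 := by ring
    _ ≤ 2 * R ^ 2 * Real.exp (π * R) * x ^ 2 := by
        have : (Real.exp (R * x))^2 = Real.exp (2 * (R * x)) := by
          rw [← Real.exp_nat_mul]; norm_num
        rw [this]
        have : 2 * (R * x) ≤ π * R := by
          calc 2 * (R * x) ≤ 2 * (R * (π/2)) := by gcongr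
            _ = π * R := by ring
        have h4 := Real.exp_le_exp.2 this
        nlinarith [sq_nonneg (R*x), mul_nonneg (mul_nonneg (sq_nonneg R) (sq_nonneg x)) (sub_nonneg.2 h4)]

noncomputable def Gint (n : ℕ) (z : ℂ) : ℂ :=
  ∫ x in (0:ℝ)..π/2, Complex.cos (2*z*x) * (Real.cos x : ℂ)^(2*n)

lemma Gint_differentiable (n : ℕ) : Differentiable ℂ (Gint n) := by
  intro z₀
  set F : ℂ → ℝ → ℂ := fun z x => Complex.cos (2*z*x) * (Real.cos x : ℂ)^(2*n) with hF
  set F' : ℂ → ℝ → ℂ := fun z x => -Complex.sin (2*z*x) * (2*x) * (Real.cos x : ℂ)^(2*n) with hF'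
  have cont : ∀ z : ℂ, Continuous (F z) := fun z => by
    fun_prop
  have cont' : ∀ z : ℂ, Continuous (F' z) := fun z => by
    fun_prop
  have key := intervalIntegral.hasDerivAt_integral_of_dominated_loc_of_deriv_le
    (𝕜 := ℂ) (μ := MeasureTheory.volume) (F := F) (F' := F')
    (x₀ := z₀) (a := 0) (b := π/2)
    (bound := fun _ => π * Real.exp (π * (‖z₀‖ + 1)))
    (Metric.ball_mem_nhds z₀ one_pos)
    (Filter.Eventually.of_forall fun z => (cont z).aestronglyMeasurable)
    ((cont z₀).intervalIntegrable _ _)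
    ((cont' z₀).aestronglyMeasurable)
    ?_ (by apply _root_.intervalIntegrable_const) ?_
  · exact key.2.differentiableAt
  · refine MeasureTheory.ae_of_all _ fun x hx z hz => ?_
    have hx' : x ∈ Set.Ioc (0:ℝ) (π/2) := by
      rwa [Set.uIoc_of_le (by positivity : (0:ℝ) ≤ π/2)] at hx
    have hx0 : 0 ≤ x := hx'.1.le
    have hxpi : x ≤ π / 2 := hx'.2
    have hzn : ‖z‖ ≤ ‖z₀‖ + 1 := by
      have := (Metric.mem_ball.1 hz).le
      have : ‖z - z₀‖ ≤ 1 := by rwa [← dist_eq_norm]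
      calc ‖z‖ = ‖z₀ + (z - z₀)‖ := by ring_nf
        _ ≤ ‖z₀‖ + ‖z - z₀‖ := norm_add_le _ _
        _ ≤ ‖z₀‖ + 1 := by linarith
    have hsin : ‖Complex.sin (2*z*x)‖ ≤ Real.exp (π * (‖z₀‖ + 1)) := by
      refine (norm_csin_le_exp _).trans (Real.exp_le_exp.2 ?_)
      calc ‖2*z*(x:ℂ)‖ = 2 * ‖z‖ * x := by
            rw [norm_mul, norm_mul, Complex.norm_real, Real.norm_of_nonneg hx0]
            norm_num
        _ ≤ 2 * (‖z₀‖+1) * (π/2) := by gcongr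
        _ = π * (‖z₀‖ + 1) := by ring
    have hcos : ‖(Real.cos x : ℂ)^(2*n)‖ ≤ 1 := by
      rw [norm_pow, Complex.norm_real, Real.norm_eq_abs]
      exact pow_le_one₀ (abs_nonneg _) (Real.abs_cos_le_one x)
    calc ‖F' z x‖ = ‖Complex.sin (2*z*x)‖ * (2*x) * ‖(Real.cos x : ℂ)^(2*n)‖ := by
          rw [hF']; rw [norm_mul, norm_mul, norm_neg]
          congr 2
          rw [norm_mul, Complex.norm_ofNat, Complex.norm_real, Real.norm_of_nonneg hx0]
      _ ≤ Real.exp (π * (‖z₀‖ + 1)) * (2*(π/2)) * 1 := by gcongr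
      _ = π * Real.exp (π * (‖z₀‖ + 1)) := by ring
  · refine MeasureTheory.ae_of_all _ fun x hx z hz => ?_
    have h1 : HasDerivAt (fun z : ℂ => 2*z*(x:ℂ)) (2*x) z := by
      simpa using ((hasDerivAt_id z).const_mul (2:ℂ)).mul_const (x:ℂ)
    have h2 : HasDerivAt (fun z : ℂ => Complex.cos (2*z*x))
        (-Complex.sin (2*z*x) * (2*x)) z := by
      exact h1.ccos
    simpa [hF, hF'] using h2.mul_const ((Real.cos x : ℂ)^(2*n))

noncomputable def Cn (n : ℕ) : ℝ := ∫ x in (0:ℝ)..π/2, Real.cos x ^ (2*n)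

lemma Cn_pos (n : ℕ) : 0 < Cn n := EulerSine.integral_cos_pow_pos _

noncomputable def S (n : ℕ) (z : ℂ) : ℂ := Gint n z / (Cn n : ℂ)

lemma S_differentiable (n : ℕ) : Differentiable ℂ (S n) :=
  (Gint_differentiable n).div_const _

-- recursion: Cn (n+1) = (2n+1)/(2n+2) * Cn n
lemma Cn_succ (n : ℕ) : Cn (n+1) = (2*(n:ℝ)+1)/(2*(n:ℝ)+2) * Cn n := by
  have aux' : 2 * (n+1) = 2 * n + 2 := by ring
  rw [Cn, Cn, EulerSine.integral_cos_pow_eq, EulerSine.integral_cos_pow_eq, aux',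
    integral_sin_pow, sin_zero, sin_pi, pow_succ', zero_mul, zero_mul, zero_mul, sub_zero,
    zero_div, zero_add, ← mul_assoc, ← mul_assoc, mul_comm (1 / 2 : ℝ) _]
  push_cast
  ring

lemma integral_sin_sq_cos_pow (n : ℕ) :
    (∫ x in (0:ℝ)..π/2, Real.sin x ^ 2 * Real.cos x ^ (2*n)) = Cn n / (2*(n:ℝ)+2) := by
  have h1 : ∀ x : ℝ, Real.sin x ^ 2 * Real.cos x ^ (2*n)
      = Real.cos x ^ (2*n) - Real.cos x ^ (2*(n+1)) := by
    intro x
    have := Real.sin_sq_add_cos_sq x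
    have h2 : 2*(n+1) = 2*n + 2 := by ring
    rw [h2, pow_add]
    linear_combination (Real.cos x ^ (2*n)) * this
  rw [intervalIntegral.integral_congr (g := fun x => Real.cos x ^ (2*n) - Real.cos x ^ (2*(n+1)))
    (fun x _ => h1 x)]
  rw [intervalIntegral.integral_sub (f := fun x => Real.cos x ^ (2*n)) (g := fun x => Real.cos x ^ (2*(n+1)))
    ((Real.continuous_cos.pow _).intervalIntegrable _ _)
    ((Real.continuous_cos.pow _).intervalIntegrable _ _)]
  show Cn n - Cn (n+1) = _
  rw [Cn_succ]
  have h3 : (2*(n:ℝ)+2) ≠ 0 := by positivity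
  field_simp
  ring

lemma S_bound {R : ℝ} (hR : 0 ≤ R) {z : ℂ} (hz : ‖z‖ ≤ R) (n : ℕ) :
    ‖S n z - 1‖ ≤ 2*R^2*Real.exp (π*R) * (π^2/4) / (2*(n:ℝ)+2) := by
  set M := 2*R^2*Real.exp (π*R) with hM
  have hM0 : 0 ≤ M := by positivity
  have hC := Cn_pos n
  have hcont1 : Continuous fun x : ℝ => (Complex.cos (2*z*x) - 1) * (Real.cos x : ℂ)^(2*n) := by
    fun_prop
  have hCcast : (∫ x in (0:ℝ)..π/2, ((Real.cos x : ℂ))^(2*n)) = ((Cn n : ℝ) : ℂ) := by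
    rw [Cn, ← intervalIntegral.integral_ofReal]
    norm_num
  have hCne : ((Cn n : ℝ) : ℂ) ≠ 0 := (Complex.ofReal_ne_zero).2 hC.ne'
  have hGsub : Gint n z - ((Cn n : ℝ) : ℂ) = ∫ x in (0:ℝ)..π/2,
      (Complex.cos (2*z*x) - 1) * (Real.cos x : ℂ)^(2*n) := by
    rw [Gint, ← hCcast, ← intervalIntegral.integral_sub
      ((by fun_prop : Continuous fun x : ℝ =>
        Complex.cos (2*z*x) * (Real.cos x : ℂ)^(2*n)).intervalIntegrable _ _)
      ((by fun_prop : Continuous fun x : ℝ =>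
        ((Real.cos x : ℂ))^(2*n)).intervalIntegrable _ _)]
    congr 1
    funext x
    ring
  have h1 : S n z - 1 = (Gint n z - ((Cn n : ℝ) : ℂ)) / ((Cn n : ℝ) : ℂ) := by
    rw [S]
    field_simp
  have h2 : ‖∫ x in (0:ℝ)..π/2, (Complex.cos (2*z*x) - 1) * (Real.cos x : ℂ)^(2*n)‖
      ≤ M * (π^2/4) * (Cn n / (2*(n:ℝ)+2)) := by
    calc ‖∫ x in (0:ℝ)..π/2, (Complex.cos (2*z*x) - 1) * (Real.cos x : ℂ)^(2*n)‖
        ≤ ∫ x in (0:ℝ)..π/2, ‖(Complex.cos (2*z*x) - 1) * (Real.cos x : ℂ)^(2*n)‖ :=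
          intervalIntegral.norm_integral_le_integral_norm (by positivity)
      _ ≤ ∫ x in (0:ℝ)..π/2, M * (π^2/4) * (Real.sin x ^ 2 * Real.cos x ^ (2*n)) := by
          refine intervalIntegral.integral_mono_on (by positivity)
            (hcont1.norm.intervalIntegrable _ _)
            ((continuous_const.mul ((Real.continuous_sin.pow 2).mul
              (Real.continuous_cos.pow _))).intervalIntegrable _ _) ?_
          intro x hx
          have hx0 : 0 ≤ x := hx.1
          have hxpi : x ≤ π/2 := hx.2
          have hpi := Real.pi_pos
          have hsin0 : 0 ≤ Real.sin x := Real.sin_nonneg_of_nonneg_of_le_pi hx0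
            (hxpi.trans (by linarith))
          have hcos0 : 0 ≤ Real.cos x := Real.cos_nonneg_of_mem_Icc ⟨by linarith, hxpi⟩
          have hcp : 0 ≤ Real.cos x ^ (2*n) := pow_nonneg hcos0 _
          have hmls := Real.mul_le_sin hx0 hxpi
          have hxle : x ≤ (π/2) * Real.sin x := by
            calc x = (2/π * x) * (π/2) := by field_simp
              _ ≤ Real.sin x * (π/2) :=
                  mul_le_mul_of_nonneg_right hmls (by positivity)
              _ = (π/2) * Real.sin x := by ring
          have hxsq : x^2 ≤ (π^2/4) * Real.sin x ^ 2 := by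
            have h := mul_self_le_mul_self hx0 hxle
            calc x^2 = x * x := sq x
              _ ≤ ((π/2) * Real.sin x) * ((π/2) * Real.sin x) := h
              _ = (π^2/4) * Real.sin x ^ 2 := by ring
          have hcos : ‖((Real.cos x : ℂ))^(2*n)‖ = Real.cos x ^ (2*n) := by
            rw [norm_pow, Complex.norm_real, Real.norm_eq_abs,
              (Even.pow_abs ⟨n, by ring⟩ _ : |Real.cos x| ^ (2*n) = _)]
          rw [norm_mul, hcos]
          have hb := norm_cos_two_mul_sub_one_le hR hz hx0 hxpi
          calc ‖Complex.cos (2*z*x) - 1‖ * Real.cos x ^ (2*n)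
              ≤ (M * x^2) * Real.cos x ^ (2*n) :=
                mul_le_mul_of_nonneg_right hb hcp
            _ ≤ (M * ((π^2/4) * Real.sin x ^ 2)) * Real.cos x ^ (2*n) :=
                mul_le_mul_of_nonneg_right (mul_le_mul_of_nonneg_left hxsq hM0) hcp
            _ = M * (π^2/4) * (Real.sin x ^ 2 * Real.cos x ^ (2*n)) := by ring
      _ = M * (π^2/4) * (Cn n / (2*(n:ℝ)+2)) := by
          rw [intervalIntegral.integral_const_mul, integral_sin_sq_cos_pow]
  rw [h1, hGsub]
  rw [norm_div, Complex.norm_real, Real.norm_of_nonneg hC.le]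
  rw [div_le_div_iff₀ hC (by positivity)]
  calc ‖∫ x in (0:ℝ)..π/2, (Complex.cos (2*z*x) - 1) * (Real.cos x : ℂ)^(2*n)‖ * (2*(n:ℝ)+2)
      ≤ (M * (π^2/4) * (Cn n / (2*(n:ℝ)+2))) * (2*(n:ℝ)+2) :=
        mul_le_mul_of_nonneg_right h2 (by positivity)
    _ = M * (π^2/4) * Cn n := by
        field_simp

lemma S_nat_zero {n m : ℕ} (hnm : n < m) : S n (m : ℂ) = 0 := by
  have key := EulerSine.sin_pi_mul_eq (m : ℂ) n
  have hsin : Complex.sin (π * m) = 0 := by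
    rw [mul_comm]
    exact Complex.sin_nat_mul_pi m
  rw [hsin] at key
  have hCne : ((Cn n : ℝ) : ℂ) ≠ 0 := (Complex.ofReal_ne_zero).2 (Cn_pos n).ne'
  have hP : (π : ℂ) * m * ∏ j ∈ Finset.range n, ((1:ℂ) - (m:ℂ)^2/((j:ℂ)+1)^2) ≠ 0 := by
    refine mul_ne_zero (mul_ne_zero ?_ ?_) ?_
    · exact Complex.ofReal_ne_zero.2 Real.pi_ne_zero
    · exact Nat.cast_ne_zero.2 (by omega)
    · rw [Finset.prod_ne_zero_iff]
      intro j hj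
      have hjm : j + 1 < m := lt_of_le_of_lt (Nat.succ_le_of_lt (Finset.mem_range.1 hj)) hnm
      intro h
      have hd : ((j:ℂ)+1) ≠ 0 := Nat.cast_add_one_ne_zero j
      have h2 : ((m:ℂ))^2 = ((j:ℂ)+1)^2 := by
        have hd2 : ((j:ℂ)+1)^2 ≠ 0 := pow_ne_zero _ hd
        field_simp at h
        linear_combination -h
      have h3 : ((m^2 : ℕ) : ℂ) = (((j+1)^2 : ℕ) : ℂ) := by push_cast; linear_combination h2
      have h4 : m^2 = (j+1)^2 := Nat.cast_injective h3
      have h5 : m = j + 1 := by nlinarith [h4]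
      omega
  have hG : Gint n (m : ℂ) = 0 := by
    have := key.symm
    rw [div_eq_zero_iff] at this
    rcases this with h | h
    · rcases mul_eq_zero.1 h with h' | h'
      · exact absurd h' hP
      · exact h'
    · exact absurd h hCne
  rw [S, hG, zero_div]


/-- The algebra `O(ℂ)` of entire functions, as a subalgebra of `C(ℂ, ℂ)`; its subspace
topology (from the compact-open topology) is the topology of uniform convergence on
compact subsets of `ℂ`, making it a Fréchet algebra. -/
noncomputable def Entire : Subalgebra ℂ C(ℂ, ℂ) where
  carrier := {f : C(ℂ, ℂ) | Differentiable ℂ f}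
  mul_mem' hf hg := hf.mul hg
  add_mem' hf hg := hf.add hg
  algebraMap_mem' c := by
    show Differentiable ℂ ⇑(algebraMap ℂ C(ℂ, ℂ) c)
    simp only [Algebra.algebraMap_eq_smul_one]
    exact (differentiable_const (1 : ℂ)).const_smul c

noncomputable def sE (n : ℕ) : Entire :=
  ⟨⟨S n, (S_differentiable n).continuous⟩, S_differentiable n⟩


/-- The set `I = {f ∈ O(ℂ) : f(n) = 0 for all sufficiently large n ∈ ℕ}` is a dense
proper ideal in the Fréchet algebra `O(ℂ)` of entire functions. -/
theorem eventually_vanishing_on_naturals_dense_proper_ideal :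
    ∃ I : Ideal Entire,
      (∀ f : Entire, f ∈ I ↔ ∃ N : ℕ, ∀ n : ℕ, N ≤ n → (f : C(ℂ, ℂ)) n = 0) ∧
      Dense (I : Set Entire) ∧ I ≠ ⊤ := by
  refine ⟨{ carrier := {f : Entire | ∃ N : ℕ, ∀ n : ℕ, N ≤ n → (f : C(ℂ, ℂ)) n = 0}
            add_mem' := ?_
            zero_mem' := ⟨0, fun n _ => rfl⟩
            smul_mem' := ?_ }, fun f => Iff.rfl, ?_, ?_⟩
  · rintro f g ⟨N, hN⟩ ⟨M, hM⟩
    exact ⟨max N M, fun n hn => by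
      show (f : C(ℂ,ℂ)) n + (g : C(ℂ,ℂ)) n = 0
      rw [hN n (le_trans (le_max_left _ _) hn), hM n (le_trans (le_max_right _ _) hn), add_zero]⟩
  · rintro c f ⟨N, hN⟩
    exact ⟨N, fun n hn => by
      show (c : C(ℂ,ℂ)) n * (f : C(ℂ,ℂ)) n = 0
      rw [hN n hn, mul_zero]⟩
  · -- density
    rw [dense_iff_closure_eq]
    refine Set.eq_univ_of_forall fun f => ?_
    refine mem_closure_of_tendsto (f := fun k : ℕ => f * sE k) (b := atTop) ?_
      (Filter.Eventually.of_forall fun k => ?_)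
    · -- Tendsto (fun k => f * sE k) atTop (𝓝 f)
      rw [tendsto_subtype_rng]
      rw [ContinuousMap.tendsto_iff_forall_isCompact_tendstoUniformlyOn]
      intro K hK
      rw [Metric.tendstoUniformlyOn_iff]
      intro ε hε
      obtain ⟨R₀, hR₀⟩ := hK.isBounded.subset_closedBall (0 : ℂ)
      set R := max R₀ 0 with hRdef
      have hR : 0 ≤ R := le_max_right _ _
      obtain ⟨B₀, hB₀⟩ := hK.exists_bound_of_continuousOn (f : C(ℂ,ℂ)).continuous.continuousOn
      set B := max B₀ 0 with hBdef
      have hB : 0 ≤ B := le_max_right _ _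
      set M := 2*R^2*Real.exp (π*R) * (π^2/4) with hMdef
      have hM : 0 ≤ M := by positivity
      have hd : Filter.Tendsto (fun k : ℕ => M / (2*(k:ℝ)+2)) atTop (𝓝 0) := by
        apply Filter.Tendsto.div_atTop tendsto_const_nhds
        apply Filter.tendsto_atTop_add_const_right
        exact (tendsto_natCast_atTop_atTop (R := ℝ)).const_mul_atTop two_pos
      have hlim : Filter.Tendsto (fun k : ℕ => B * (M / (2*(k:ℝ)+2))) atTop (𝓝 (B * 0)) :=
        hd.const_mul B
      rw [mul_zero] at hlim
      filter_upwards [hlim.eventually (gt_mem_nhds hε)] with k hk z hz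
      have hzR : ‖z‖ ≤ R := by
        have := hR₀ hz
        rw [Metric.mem_closedBall, dist_zero_right] at this
        exact this.trans (le_max_left _ _)
      have hfz : ‖(f : C(ℂ,ℂ)) z‖ ≤ B := (hB₀ z hz).trans (le_max_left _ _)
      have hSb := S_bound hR hzR k
      have heval : ((f * sE k : Entire) : C(ℂ,ℂ)) z = (f : C(ℂ,ℂ)) z * S k z := rfl
      rw [dist_eq_norm, heval]
      calc ‖(f : C(ℂ,ℂ)) z - (f : C(ℂ,ℂ)) z * S k z‖
          = ‖(f : C(ℂ,ℂ)) z‖ * ‖S k z - 1‖ := by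
            rw [← norm_sub_rev ((f : C(ℂ,ℂ)) z * S k z), ← norm_mul]
            congr 1; ring
        _ ≤ B * (M / (2*(k:ℝ)+2)) := by
            refine mul_le_mul hfz (hSb.trans_eq ?_) (norm_nonneg _) hB
            rw [hMdef]
        _ < ε := hk
    · -- f * sE k ∈ ideal
      refine ⟨k + 1, fun m hm => ?_⟩
      show (f : C(ℂ,ℂ)) m * S k m = 0
      rw [S_nat_zero (by omega : k < m), mul_zero]
  · -- proper
    intro htop
    have h1 := (Ideal.eq_top_iff_one _).1 htop
    obtain ⟨N, hN⟩ := h1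
    have := hN N le_rfl
    simp at this
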